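/- Let κ be a regular cardinal and M a module which is a direct sum of κ-presented modules. Then every direct summand of M is a direct sum of κ-presented modules. -/

import Mathlib

universe u

open Cardinal Submodule Set

/-- A module is `κ`-generated if it has a generating set of cardinality at most `κ`. -/
def IsGenerated (κ : Cardinal.{u}) (R : Type u) [Ring R]
    (M : Type u) [AddCommGroup M] [Module R M] : Prop :=
  ∃ S : Set M, Cardinal.mk S ≤ κ ∧ Submodule.span R S = ⊤

/-- A module is `κ`-presented if it is `κ`-generated and admits a free presentation
with `κ`-generated kernel. -/
def IsPresented (κ : Cardinal.{u}) (R : Type u) [Ring R]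
    (M : Type u) [AddCommGroup M] [Module R M] : Prop :=
  IsGenerated κ R M ∧
    ∃ (ι : Type u) (f : (ι →₀ R) →ₗ[R] M), Function.Surjective f ∧
      IsGenerated κ R (LinearMap.ker f)

section Helpers

variable {R : Type u} [Ring R] {M : Type u} [AddCommGroup M] [Module R M]
  {M' : Type u} [AddCommGroup M'] [Module R M']

/-- Submodule-level version of `κ`-generation. -/
def SGen (κ : Cardinal.{u}) (p : Submodule R M) : Prop :=
  ∃ S : Set M, Cardinal.mk S ≤ κ ∧ Submodule.span R S = p

theorem SGen.isGenerated {κ : Cardinal.{u}} {p : Submodule R M} (h : SGen κ p) :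
    IsGenerated κ R ↥p := by
  obtain ⟨S, hS, hspan⟩ := h
  have hSp : S ⊆ (p : Set M) := hspan ▸ Submodule.subset_span
  refine ⟨p.subtype ⁻¹' S, ?_, ?_⟩
  · exact (Cardinal.mk_preimage_of_injective _ _ p.injective_subtype).trans hS
  · apply Submodule.map_injective_of_injective p.injective_subtype
    have hsub : S ⊆ Set.range ⇑p.subtype := fun x hx => ⟨⟨x, hSp hx⟩, rfl⟩
    rw [Submodule.map_span, Submodule.map_top, Submodule.range_subtype,
      Set.image_preimage_eq_inter_range,
      Set.inter_eq_self_of_subset_left hsub, hspan]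

theorem IsGenerated.sgen {κ : Cardinal.{u}} {p : Submodule R M} (h : IsGenerated κ R ↥p) :
    SGen κ p := by
  obtain ⟨S, hS, hspan⟩ := h
  refine ⟨p.subtype '' S, (Cardinal.mk_image_le).trans hS, ?_⟩
  rw [← Submodule.map_span, hspan, Submodule.map_top, Submodule.range_subtype]

theorem SGen.map {κ : Cardinal.{u}} {p : Submodule R M} (f : M →ₗ[R] M') (h : SGen κ p) :
    SGen κ (p.map f) := by
  obtain ⟨S, hS, hspan⟩ := h
  refine ⟨f '' S, (Cardinal.mk_image_le).trans hS, ?_⟩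
  rw [Submodule.span_image, hspan]

theorem SGen.of_eq {κ : Cardinal.{u}} {p q : Submodule R M} (h : SGen κ p) (hpq : p = q) :
    SGen κ q := hpq ▸ h

theorem sgen_iSup {κ : Cardinal.{u}} (hκ : ℵ₀ ≤ κ) {ι' : Type u} (hι : Cardinal.mk ι' ≤ κ)
    {A : ι' → Submodule R M} (h : ∀ i, SGen κ (A i)) : SGen κ (⨆ i, A i) := by
  choose S hS hspan using h
  refine ⟨⋃ i, S i, ?_, ?_⟩
  · refine (Cardinal.mk_iUnion_le _).trans ?_
    refine le_trans (mul_le_mul' hι (ciSup_le' fun i => hS i)) ?_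
    exact le_of_eq (Cardinal.mul_eq_self hκ)
  · rw [Submodule.span_iUnion]
    exact iSup_congr hspan

theorem sgen_biSup {κ : Cardinal.{u}} (hκ : ℵ₀ ≤ κ) {ι' : Type u} {T : Set ι'}
    (hT : Cardinal.mk T ≤ κ) {A : ι' → Submodule R M} (h : ∀ i ∈ T, SGen κ (A i)) :
    SGen κ (⨆ i ∈ T, A i) := by
  rw [iSup_subtype']
  exact sgen_iSup hκ hT fun i => h i i.2

/-- extension lemma: if `p ⊓ ker f` and `p.map f` are κ-generated then so is `p`. -/
theorem sgen_of_ker_of_map {κ : Cardinal.{u}} (hκ : ℵ₀ ≤ κ) (f : M →ₗ[R] M')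
    {p : Submodule R M} (hker : SGen κ (p ⊓ LinearMap.ker f)) (himg : SGen κ (p.map f)) :
    SGen κ p := by
  obtain ⟨Sk, hSk, hSkspan⟩ := hker
  obtain ⟨Si, hSi, hSispan⟩ := himg
  have hSip : Si ⊆ ↑(p.map f) := hSispan ▸ Submodule.subset_span
  have hlift : ∀ y ∈ Si, ∃ x, x ∈ p ∧ f x = y := by
    intro y hy
    obtain ⟨x, hx, rfl⟩ := hSip hy
    exact ⟨x, hx, rfl⟩
  choose g hg1 hg2 using hlift
  set L : Set M := (fun y : Si => g y.1 y.2) '' Set.univ with hL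
  have hLp : L ⊆ (p : Set M) := by
    rintro w ⟨⟨y, hy⟩, -, rfl⟩
    exact hg1 y hy
  refine ⟨Sk ∪ L, ?_, ?_⟩
  · refine (Cardinal.mk_union_le _ _).trans ?_
    have h2 : Cardinal.mk L ≤ κ := by
      refine (Cardinal.mk_image_le).trans ?_
      simpa using hSi
    calc Cardinal.mk Sk + Cardinal.mk L ≤ κ + κ := add_le_add hSk h2
      _ = κ := Cardinal.add_eq_self hκ
  · apply le_antisymm
    · rw [Submodule.span_le]
      rintro x (hx | hx)
      · exact ((hSkspan ▸ Submodule.subset_span hx : x ∈ p ⊓ LinearMap.ker f)).1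
      · exact hLp hx
    · intro x hx
      have hfx : f x ∈ Submodule.span R Si := by
        rw [hSispan]; exact Submodule.mem_map_of_mem hx
      have hSg : Si ⊆ f '' L := by
        rintro y hy
        exact ⟨g y hy, ⟨⟨y, hy⟩, Set.mem_univ _, rfl⟩, hg2 y hy⟩
      have hfx2 : f x ∈ Submodule.map f (Submodule.span R L) := by
        rw [← Submodule.span_image]
        exact Submodule.span_mono hSg hfx
      obtain ⟨z, hz, hfz⟩ := hfx2
      have hzp : z ∈ p := Submodule.span_le.mpr hLp hz
      have hxz : x - z ∈ Submodule.span R Sk := by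
        rw [hSkspan]
        exact ⟨Submodule.sub_mem p hx hzp, by simp [LinearMap.mem_ker, map_sub, hfz]⟩
      have hxx : x = (x - z) + z := by abel
      rw [hxx]
      exact Submodule.add_mem _
        (Submodule.span_mono Set.subset_union_left hxz)
        (Submodule.span_mono Set.subset_union_right hz)


/-- The projection onto `p` along `q`, as a map `M →ₗ[R] M`. -/
noncomputable def prC {p q : Submodule R M} (h : IsCompl p q) : M →ₗ[R] M :=
  p.subtype ∘ₗ Submodule.linearProjOfIsCompl p q h

theorem prC_mem {p q : Submodule R M} (h : IsCompl p q) (x : M) : prC h x ∈ p :=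
  (Submodule.linearProjOfIsCompl p q h x).2

theorem prC_apply_left {p q : Submodule R M} (h : IsCompl p q) {x : M} (hx : x ∈ p) :
    prC h x = x :=
  congrArg Subtype.val (Submodule.linearProjOfIsCompl_apply_left h ⟨x, hx⟩)

theorem prC_apply_right {p q : Submodule R M} (h : IsCompl p q) {x : M} (hx : x ∈ q) :
    prC h x = 0 := by
  have := Submodule.projectionOnto_apply_of_mem_right h hx
  simp [prC]; exact this

theorem prC_sub_mem {p q : Submodule R M} (h : IsCompl p q) (x : M) : x - prC h x ∈ q := by
  have := Submodule.projection_add_projection_eq_self h x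
  have h2 : x - prC h x = (q.linearProjOfIsCompl p h.symm x : M) := by
    rw [sub_eq_iff_eq_add]; exact this.symm.trans (add_comm _ _)
  rw [h2]
  exact (q.linearProjOfIsCompl p h.symm x).2

theorem prC_ker {p q : Submodule R M} (h : IsCompl p q) : LinearMap.ker (prC h) = q := by
  ext x
  constructor
  · intro hx
    have : prC h x = 0 := hx
    have h2 := prC_sub_mem h x
    rwa [this, sub_zero] at h2
  · intro hx
    exact LinearMap.mem_ker.mpr (prC_apply_right h hx)

theorem sum_eq_zero_of_indep {ι : Type u} {A : ι → Submodule R M} (h : iSupIndep A)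
    (F : Finset ι) (a : ι → M) (ha : ∀ i ∈ F, a i ∈ A i) (h0 : ∑ i ∈ F, a i = 0) :
    ∀ i ∈ F, a i = 0 := by
  classical
  intro i hi
  have hsum : a i + ∑ j ∈ F.erase i, a j = 0 := by
    rwa [Finset.add_sum_erase F a hi]
  have hmem : ∑ j ∈ F.erase i, a j ∈ ⨆ (k) (_ : k ≠ i), A k := by
    refine Submodule.sum_mem _ fun j hj => ?_
    exact Submodule.mem_iSup_of_mem j
      (Submodule.mem_iSup_of_mem (Finset.ne_of_mem_erase hj) (ha j (Finset.mem_of_mem_erase hj)))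
  have hai : a i ∈ ⨆ (k) (_ : k ≠ i), A k := by
    have : a i = -∑ j ∈ F.erase i, a j := eq_neg_of_add_eq_zero_left hsum
    rw [this]
    exact Submodule.neg_mem _ hmem
  exact Submodule.disjoint_def.mp (h i) _ (ha i hi) hai

theorem mem_biSup_decomp {ι : Type u} [DecidableEq ι] {A : ι → Submodule R M} {T : Set ι} {x : M}
    (hx : x ∈ ⨆ i ∈ T, A i) :
    ∃ (F : Finset ι) (a : ι → M), ↑F ⊆ T ∧ (∀ i ∈ F, a i ∈ A i) ∧ ∑ i ∈ F, a i = x := by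
  classical
  rw [iSup_subtype'] at hx
  obtain ⟨f, hf, hsum⟩ := (Submodule.mem_iSup_iff_exists_finsupp _ _).mp hx
  refine ⟨f.support.image Subtype.val, fun i => if h : i ∈ T then f ⟨i, h⟩ else 0, ?_, ?_, ?_⟩
  · rintro i hi
    simp only [Finset.coe_image, Set.mem_image] at hi
    obtain ⟨⟨j, hj⟩, -, rfl⟩ := hi
    exact hj
  · intro i hi
    simp only [Finset.mem_image] at hi
    obtain ⟨⟨j, hj⟩, -, rfl⟩ := hi
    simpa [hj] using hf ⟨j, hj⟩
  · rw [Finset.sum_image (fun a _ b _ hab => Subtype.val_injective hab)]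
    rw [← hsum, Finsupp.sum]
    exact Finset.sum_congr rfl fun j _ => by simp [j.2]

theorem disjoint_biSup_biSup {ι : Type u} [DecidableEq ι] {A : ι → Submodule R M}
    (h : iSupIndep A) {T U : Set ι} (hTU : Disjoint T U) :
    Disjoint (⨆ i ∈ T, A i) (⨆ i ∈ U, A i) := by
  rw [Submodule.disjoint_def]
  intro x h1 h2
  obtain ⟨F, a, hFT, ha, hsa⟩ := mem_biSup_decomp h1
  obtain ⟨G, b, hGU, hb, hsb⟩ := mem_biSup_decomp h2
  have hFG : ∀ i ∈ F, i ∉ G := fun i hiF hiG =>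
    (hTU.ne_of_mem (hFT hiF) (hGU hiG)) rfl
  set c : ι → M := fun i => (if i ∈ F then a i else 0) - (if i ∈ G then b i else 0) with hc
  have hcsum : ∑ i ∈ F ∪ G, c i = 0 := by
    rw [hc]
    rw [Finset.sum_sub_distrib]
    have e1 : ∑ i ∈ F ∪ G, (if i ∈ F then a i else 0) = ∑ i ∈ F, a i := by
      rw [Finset.sum_ite_mem, Finset.union_inter_cancel_left]
    have e2 : ∑ i ∈ F ∪ G, (if i ∈ G then b i else 0) = ∑ i ∈ G, b i := by
      rw [Finset.sum_ite_mem, Finset.union_inter_cancel_right]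
    rw [e1, e2, hsa, hsb, sub_self]
  have hcA : ∀ i ∈ F ∪ G, c i ∈ A i := by
    intro i _
    rw [hc]
    refine Submodule.sub_mem _ ?_ ?_ <;> split <;>
      first | exact ha i ‹_› | exact hb i ‹_› | exact Submodule.zero_mem _
  have hzero := sum_eq_zero_of_indep h (F ∪ G) c hcA hcsum
  have hx0 : ∀ i ∈ F, a i = 0 := by
    intro i hiF
    have := hzero i (Finset.mem_union_left _ hiF)
    rw [hc] at this
    simpa [hiF, hFG i hiF] using this
  rw [← hsa]
  exact Finset.sum_eq_zero hx0

theorem IsPresented.of_equiv {κ : Cardinal.{u}} (e : M ≃ₗ[R] M') (h : IsPresented κ R M) :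
    IsPresented κ R M' := by
  obtain ⟨⟨S, hS, hspan⟩, ι', f, hf, hker⟩ := h
  refine ⟨⟨e '' S, (Cardinal.mk_image_le).trans hS, ?_⟩, ι', e.toLinearMap ∘ₗ f,
    e.surjective.comp hf, ?_⟩
  · rw [Submodule.span_image_linearEquiv, hspan, Submodule.map_top]
    exact LinearMap.range_eq_top.mpr e.surjective
  · have : LinearMap.ker (e.toLinearMap ∘ₗ f) = LinearMap.ker f := by
      rw [LinearMap.ker_comp, LinearEquiv.ker, Submodule.comap_bot]
    rw [this]
    exact hker


theorem presented_of_summand {κ : Cardinal.{u}} (hκ : κ.IsRegular)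
    {ι : Type u} [DecidableEq ι] {A : ι → Submodule R M} (hint : DirectSum.IsInternal A)
    (hpres : ∀ i, IsPresented κ R (A i))
    {Q C : Submodule R M} (hQC : IsCompl Q C) (hQgen : SGen κ Q) :
    IsPresented κ R ↥Q := by
  classical
  have hκ0 : ℵ₀ ≤ κ := hκ.aleph0_le
  -- supports
  have hsupp : ∀ x : M, ∃ F : Finset ι, x ∈ ⨆ i ∈ F, A i := by
    intro x
    have hx : x ∈ ⨆ i, A i := by rw [hint.submodule_iSup_eq_top]; trivial
    exact Submodule.mem_iSup_iff_exists_finset.mp hx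
  choose supp hsuppmem using hsupp
  obtain ⟨G, hGcard, hGspan⟩ := hQgen
  set S : Set ι := ⋃ g ∈ G, ↑(supp g) with hSdef
  have hScard : Cardinal.mk S ≤ κ := by
    rw [hSdef, Set.biUnion_eq_iUnion]
    refine (Cardinal.mk_iUnion_le _).trans ?_
    have h1 : ⨆ g : G, Cardinal.mk ↑(↑(supp ↑g) : Set ι) ≤ ℵ₀ :=
      ciSup_le' fun g => Cardinal.mk_le_aleph0
    refine le_trans (mul_le_mul' hGcard h1) ?_
    calc κ * ℵ₀ ≤ κ * κ := mul_le_mul' le_rfl hκ0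
      _ = κ := Cardinal.mul_eq_self hκ0
  set MS : Submodule R M := ⨆ i ∈ S, A i with hMSdef
  have hQS : Q ≤ MS := by
    rw [← hGspan, Submodule.span_le]
    intro g hg
    have h1 : (⨆ i ∈ (↑(supp g) : Set ι), A i) ≤ MS := by
      refine biSup_mono fun i hi => ?_
      exact Set.mem_biUnion hg hi
    exact h1 (hsuppmem g)
  -- presentations of the summands
  have hpr : ∀ i : ι, ∃ (ιf : Type u) (fi : (ιf →₀ R) →ₗ[R] ↥(A i)),
      Function.Surjective fi ∧ SGen κ (LinearMap.ker fi) := by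
    intro i
    obtain ⟨-, ιf, fi, hfi, hker⟩ := hpres i
    exact ⟨ιf, fi, hfi, hker.sgen⟩
  choose ιf f hf hfker using hpr
  set μ : Type u := Σ i : S, ιf ↑i with hμdef
  set v : μ → M := fun z => ((f ↑z.1 (Finsupp.single z.2 1) : ↥(A ↑z.1)) : M) with hvdef
  set q : (μ →₀ R) →ₗ[R] M := Finsupp.linearCombination R v with hqdef
  set emb : ∀ i : S, (ιf ↑i →₀ R) →ₗ[R] (μ →₀ R) :=
    fun i => Finsupp.lmapDomain R R (fun k => (⟨i, k⟩ : μ)) with hembdef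
  have hcomp : ∀ (i : S) (y : ιf ↑i →₀ R), q (emb i y) = ((f ↑i y : ↥(A ↑i)) : M) := by
    intro i
    suffices h : q ∘ₗ emb i = (A ↑i).subtype ∘ₗ f ↑i by
      intro y
      simpa using LinearMap.congr_fun h y
    apply Finsupp.lhom_ext
    intro k r
    have h1 : (emb i) (Finsupp.single k r) = Finsupp.single (⟨i, k⟩ : μ) r := by
      simp [hembdef, Finsupp.mapDomain_single]
    have h2 : Finsupp.single k r = r • Finsupp.single k (1 : R) := by
      rw [Finsupp.smul_single, smul_eq_mul, mul_one]
    simp only [LinearMap.coe_comp, Function.comp_apply, h1, hqdef,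
      Finsupp.linearCombination_single]
    rw [h2, map_smul]
    simp [hvdef]
  have htop : ∀ x : (μ →₀ R), x ∈ ⨆ i : S, LinearMap.range (emb i) := by
    intro x
    induction x using Finsupp.induction with
    | zero => exact Submodule.zero_mem _
    | single_add a b g _ _ ih =>
        refine Submodule.add_mem _ ?_ ih
        refine Submodule.mem_iSup_of_mem a.1 ?_
        refine ⟨Finsupp.single a.2 b, ?_⟩
        simp only [hembdef, Finsupp.lmapDomain_apply, Finsupp.mapDomain_single]
        rfl
  have htop' : (⊤ : Submodule R (μ →₀ R)) = ⨆ i : S, LinearMap.range (emb i) :=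
    le_antisymm (fun x _ => htop x) le_top
  have hcompL : ∀ i : S, q ∘ₗ emb i = (A ↑i).subtype ∘ₗ f ↑i := by
    intro i
    apply LinearMap.ext; intro y
    simp only [LinearMap.coe_comp, Function.comp_apply]
    rw [hcomp i y]; rfl
  have hrange : LinearMap.range q = MS := by
    rw [← Submodule.map_top q, htop', Submodule.map_iSup, hMSdef, iSup_subtype']
    refine iSup_congr fun i => ?_
    calc Submodule.map q (LinearMap.range (emb i))
        = LinearMap.range (q ∘ₗ emb i) := (LinearMap.range_comp _ _).symm
      _ = LinearMap.range ((A ↑i).subtype ∘ₗ f ↑i) := by rw [hcompL i]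
      _ = A ↑i := by
          rw [LinearMap.range_comp, LinearMap.range_eq_top.mpr (hf ↑i), Submodule.map_top,
            Submodule.range_subtype]
  set p : M →ₗ[R] M := prC hQC with hpdef
  set fhat : (μ →₀ R) →ₗ[R] ↥Q :=
    LinearMap.codRestrict Q (p ∘ₗ q) (fun x => prC_mem hQC _) with hfhatdef
  have hfhat_surj : Function.Surjective fhat := by
    intro y
    have hy : (y : M) ∈ LinearMap.range q := by rw [hrange]; exact hQS y.2
    obtain ⟨x, hx⟩ := hy
    refine ⟨x, ?_⟩
    apply Subtype.ext
    show p (q x) = (y : M)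
    rw [hx]
    exact prC_apply_left hQC y.2
  have hkerfhat : LinearMap.ker fhat = Submodule.comap q C := by
    ext x
    constructor
    · intro hx
      have h1 : p (q x) = 0 := congrArg Subtype.val hx
      have h2 : q x ∈ LinearMap.ker p := h1
      rwa [hpdef, prC_ker hQC] at h2
    · intro hx
      apply Subtype.ext
      show p (q x) = 0
      exact prC_apply_right hQC hx
  have hkerq_le : LinearMap.ker q ≤ LinearMap.ker fhat := by
    intro x hx
    apply Subtype.ext
    show p (q x) = 0
    rw [LinearMap.mem_ker.mp hx, map_zero]
  -- the kernel of q is κ-generated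
  have hindS : iSupIndep (fun i : S => A ↑i) :=
    hint.submodule_iSupIndep.comp Subtype.val_injective
  have hkerq : LinearMap.ker q = ⨆ i : S, (LinearMap.ker (f ↑i)).map (emb i) := by
    apply le_antisymm
    · intro x hx
      have hxtop : x ∈ ⨆ i : S, LinearMap.range (emb i) := htop x
      obtain ⟨w, hw, hwsum⟩ := (Submodule.mem_iSup_iff_exists_finsupp _ _).mp hxtop
      have ha : ∀ i : S, q (w i) ∈ A ↑i := by
        intro i
        obtain ⟨y, hy⟩ := hw i
        rw [← hy, hcomp i y]
        exact (f ↑i y).2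
      have hsum0 : ∑ i ∈ w.support, q (w i) = 0 := by
        have h1 : ∑ i ∈ w.support, q (w i) = q x := by
          rw [← hwsum]
          exact (map_sum q _ _).symm
        rw [h1]
        exact LinearMap.mem_ker.mp hx
      have hz := sum_eq_zero_of_indep hindS w.support (fun i => q (w i)) (fun i _ => ha i) hsum0
      have hwm : ∀ i : S, w i ∈ (LinearMap.ker (f ↑i)).map (emb i) := by
        intro i
        by_cases hi : i ∈ w.support
        · obtain ⟨y, hy⟩ := hw i
          refine ⟨y, ?_, hy⟩
          have h1 : ((f ↑i y : ↥(A ↑i)) : M) = 0 := by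
            rw [← hcomp i y, hy]
            exact hz i hi
          exact LinearMap.mem_ker.mpr (Subtype.ext h1)
        · rw [Finsupp.notMem_support_iff.mp hi]
          exact Submodule.zero_mem _
      rw [← hwsum, Finsupp.sum]
      exact Submodule.sum_mem _ fun i _ => Submodule.mem_iSup_of_mem i (hwm i)
    · refine iSup_le fun i => ?_
      rintro x ⟨y, hy, rfl⟩
      apply LinearMap.mem_ker.mpr
      rw [hcomp i y, LinearMap.mem_ker.mp hy]
      rfl
  have hkerq_gen : SGen κ (LinearMap.ker q) := by
    rw [hkerq]
    refine sgen_iSup hκ0 ?_ fun i => (hfker ↑i).map (emb i)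
    exact hScard
  -- the image of the kernel of fhat is κ-generated
  have hMSgen : SGen κ MS :=
    sgen_biSup hκ0 hScard fun i _ => (hpres i).1.sgen
  have himg_eq : (LinearMap.ker fhat).map q = C ⊓ MS := by
    rw [hkerfhat, Submodule.map_comap_eq, hrange, inf_comm]
  have hCMS : C ⊓ MS = MS.map (LinearMap.id - p) := by
    apply le_antisymm
    · rintro x ⟨hxC, hxMS⟩
      refine ⟨x, hxMS, ?_⟩
      simp only [LinearMap.sub_apply, LinearMap.id_apply]
      rw [prC_apply_right hQC hxC, sub_zero]
    · rintro x ⟨y, hy, rfl⟩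
      simp only [LinearMap.sub_apply, LinearMap.id_apply]
      constructor
      · exact prC_sub_mem hQC y
      · exact Submodule.sub_mem _ hy (hQS (prC_mem hQC y))
  have hkerfhat_gen : SGen κ (LinearMap.ker fhat) := by
    refine sgen_of_ker_of_map hκ0 q ?_ ?_
    · have : LinearMap.ker fhat ⊓ LinearMap.ker q = LinearMap.ker q :=
        inf_eq_right.mpr hkerq_le
      rw [this]; exact hkerq_gen
    · rw [himg_eq, hCMS]
      exact hMSgen.map _
  -- conclude
  have hQgen' : SGen κ Q := ⟨G, hGcard, hGspan⟩
  exact ⟨hQgen'.isGenerated, μ, fhat, hfhat_surj, hkerfhat_gen.isGenerated⟩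

end Helpers

/-- Walker's theorem for `κ`-presented modules: every direct summand of a direct sum of
`κ`-presented modules is a direct sum of `κ`-presented modules. -/
theorem stmt3
    {R : Type u} [Ring R] {M : Type u} [AddCommGroup M] [Module R M]
    (κ : Cardinal.{u}) (hκ : κ.IsRegular)
    {ι : Type u} [DecidableEq ι] (A : ι → Submodule R M)
    (hint : DirectSum.IsInternal A)
    (hpres : ∀ i, IsPresented κ R (A i))
    (N : Submodule R M) (hN : ∃ N' : Submodule R M, IsCompl N N') :
    ∃ (ι' : Type u) (_ : DecidableEq ι') (B : ι' → Submodule R N),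
      DirectSum.IsInternal B ∧ ∀ j, IsPresented κ R (B j) := by
  classical
  obtain ⟨N', hc⟩ := hN
  obtain ⟨lo, wflt⟩ := exists_wellOrder ι
  have hκ0 : ℵ₀ ≤ κ := hκ.aleph0_le
  set π : M →ₗ[R] M := prC hc with hπdef
  -- supports
  have hsupp : ∀ x : M, ∃ F : Finset ι, x ∈ ⨆ i ∈ F, A i := by
    intro x
    have hx : x ∈ ⨆ i, A i := by rw [hint.submodule_iSup_eq_top]; trivial
    exact Submodule.mem_iSup_iff_exists_finset.mp hx
  choose supp hsuppmem using hsupp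
  -- generators
  have hAgen : ∀ i, SGen κ (A i) := fun i => (hpres i).1.sgen
  choose G hGcard hGspan using hAgen
  -- the submodule spanned by a set of indices
  set MS : Set ι → Submodule R M := fun T => ⨆ j ∈ T, A j with hMSdef
  have hMSmono : ∀ {T U : Set ι}, T ⊆ U → MS T ≤ MS U := fun hTU =>
    biSup_mono fun i hi => hTU hi
  have hMS_le : ∀ {j : ι} {T : Set ι}, j ∈ T → A j ≤ MS T := fun hj =>
    le_biSup _ hj
  have hMSgen : ∀ T : Set ι, Cardinal.mk T ≤ κ → SGen κ (MS T) := fun T hT =>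
    sgen_biSup hκ0 hT fun i _ => ⟨G i, hGcard i, hGspan i⟩
  -- support sets
  set D : ι → Set ι := fun i => {i} ∪ ⋃ g ∈ G i, ↑(supp (π g)) with hDdef
  have hDi : ∀ i, i ∈ D i := fun i => Set.mem_union_left _ rfl
  have hDcard : ∀ i, Cardinal.mk (D i) ≤ κ := by
    intro i
    rw [hDdef]
    refine (Cardinal.mk_union_le _ _).trans ?_
    have h1 : Cardinal.mk ({i} : Set ι) ≤ κ := by
      rw [Cardinal.mk_singleton]
      exact le_trans Cardinal.one_le_aleph0 hκ0
    have h2 : Cardinal.mk (⋃ g ∈ G i, ↑(supp (π g)) : Set ι) ≤ κ := by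
      rw [Set.biUnion_eq_iUnion]
      refine (Cardinal.mk_iUnion_le _).trans ?_
      have h3 : ⨆ g : G i, Cardinal.mk ↑(↑(supp (π ↑g)) : Set ι) ≤ ℵ₀ :=
        ciSup_le' fun g => Cardinal.mk_le_aleph0
      refine le_trans (mul_le_mul' (hGcard i) h3) ?_
      calc κ * ℵ₀ ≤ κ * κ := mul_le_mul' le_rfl hκ0
        _ = κ := Cardinal.mul_eq_self hκ0
    calc Cardinal.mk ({i} : Set ι) + Cardinal.mk (⋃ g ∈ G i, ↑(supp (π g)) : Set ι)
        ≤ κ + κ := add_le_add h1 h2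
      _ = κ := Cardinal.add_eq_self hκ0
  have hDπ : ∀ i, (A i).map π ≤ MS (D i) := by
    intro i
    rw [← hGspan i, ← Submodule.span_image, Submodule.span_le]
    rintro y ⟨g, hg, rfl⟩
    refine hMSmono ?_ (hsuppmem (π g))
    intro k hk
    exact Set.mem_union_right _ (Set.mem_biUnion hg hk)
  -- closed sets of indices
  set Closed : Set ι → Prop := fun T => ∀ j ∈ T, D j ⊆ T with hCloseddef
  have hMSinv : ∀ T, Closed T → (MS T).map π ≤ MS T := by
    intro T hT
    rw [hMSdef]
    simp only [Submodule.map_iSup]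
    refine iSup_le fun j => iSup_le fun hj => ?_
    exact le_trans (hDπ j) (hMSmono (hT j hj))
  -- closure of a singleton
  set cl : Set ι → Set ι := fun T => ⋃ j ∈ T, D j with hcldef
  set W : ι → Set ι := fun i => ⋃ n : ℕ, cl^[n] {i} with hWdef
  have hW1 : ∀ i, i ∈ W i := fun i =>
    Set.mem_iUnion.mpr ⟨0, rfl⟩
  have hWclosed : ∀ i, Closed (W i) := by
    intro i j hj
    obtain ⟨n, hn⟩ := Set.mem_iUnion.mp hj
    have h1 : D j ⊆ cl^[n + 1] {i} := by
      rw [Function.iterate_succ_apply']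
      exact Set.subset_biUnion_of_mem (u := fun j => D j) hn
    exact h1.trans (Set.subset_iUnion (fun n => cl^[n] {i}) (n + 1))
  have hclcard : ∀ T : Set ι, Cardinal.mk T ≤ κ → Cardinal.mk (cl T) ≤ κ := by
    intro T hT
    rw [hcldef]
    simp only []
    rw [Set.biUnion_eq_iUnion]
    refine (Cardinal.mk_iUnion_le _).trans ?_
    refine le_trans (mul_le_mul' hT (ciSup_le' fun j => hDcard ↑j)) ?_
    exact le_of_eq (Cardinal.mul_eq_self hκ0)
  have hWcard : ∀ i, Cardinal.mk (W i) ≤ κ := by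
    intro i
    have hEq : W i = ⋃ n : ULift.{u} ℕ, cl^[n.down] {i} := by
      show (⋃ n : ℕ, cl^[n] {i}) = ⋃ n : ULift.{u} ℕ, cl^[n.down] {i}
      ext x
      simp only [Set.mem_iUnion]
      exact ⟨fun ⟨n, hn⟩ => ⟨⟨n⟩, hn⟩, fun ⟨n, hn⟩ => ⟨n.down, hn⟩⟩
    rw [hEq]
    refine (Cardinal.mk_iUnion_le _).trans ?_
    have h1 : ∀ n : ℕ, Cardinal.mk ↑(cl^[n] {i}) ≤ κ := by
      intro n
      induction n with
      | zero =>
          simpa using le_trans Cardinal.one_le_aleph0 hκ0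
      | succ n ih =>
          rw [Function.iterate_succ_apply']
          exact hclcard _ ih
    have hulift : Cardinal.mk (ULift.{u} ℕ) = ℵ₀ := by
      rw [Cardinal.mk_uLift, Cardinal.mk_nat, Cardinal.lift_aleph0]
    refine le_trans (mul_le_mul' (le_of_eq hulift) (ciSup_le' fun n => h1 n.down)) ?_
    calc ℵ₀ * κ ≤ κ * κ := mul_le_mul' hκ0 le_rfl
      _ = κ := Cardinal.mul_eq_self hκ0
  -- the increasing continuous chains
  set SS : ι → Set ι := fun i => ⋃ j ∈ Set.Iic i, W j with hSSdef
  set SL : ι → Set ι := fun i => ⋃ j ∈ Set.Iio i, W j with hSLdef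
  have hUnion_closed : ∀ (s : Set ι) (U : ι → Set ι), (∀ j, Closed (U j)) →
      Closed (⋃ j ∈ s, U j) := by
    intro s U hU j hj
    obtain ⟨k, hks, hjk⟩ := Set.mem_iUnion₂.mp hj
    exact (hU k j hjk).trans (Set.subset_biUnion_of_mem hks)
  have hSSclosed : ∀ i, Closed (SS i) := fun i => hUnion_closed _ _ hWclosed
  have hSLclosed : ∀ i, Closed (SL i) := fun i => hUnion_closed _ _ hWclosed
  have hW_SS : ∀ i, W i ⊆ SS i := fun i =>
    Set.subset_biUnion_of_mem (u := W) (Set.mem_Iic.mpr le_rfl)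
  have hSL_SS : ∀ i, SL i ⊆ SS i := fun i =>
    Set.biUnion_subset_biUnion_left (fun j hj => le_of_lt hj)
  have hSS_SL : ∀ {j i : ι}, j < i → SS j ⊆ SL i := by
    intro j i hji x hx
    obtain ⟨k, hk, hxk⟩ := Set.mem_iUnion₂.mp hx
    exact Set.mem_biUnion (lt_of_le_of_lt hk hji) hxk
  have hSS_union : ∀ i, SS i = SL i ∪ W i := by
    intro i
    rw [hSSdef, hSLdef]
    simp only []
    rw [← Set.Iio_union_right, Set.biUnion_union]
    simp
  have hmem_SS : ∀ i, i ∈ SS i := fun i => (hW_SS i) (hW1 i)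
  -- splitting of invariant submodules
  have hsplit : ∀ T, Closed T → MS T ≤ (N ⊓ MS T) ⊔ (N' ⊓ MS T) := by
    intro T hT x hx
    refine Submodule.mem_sup.mpr ⟨π x, ⟨prC_mem hc x, hMSinv T hT ⟨x, hx, rfl⟩⟩,
      x - π x, ⟨prC_sub_mem hc x, Submodule.sub_mem _ hx (hMSinv T hT ⟨x, hx, rfl⟩)⟩, by abel⟩
  have hMStop : ∀ T : Set ι, MS T ⊔ MS Tᶜ = ⊤ := by
    intro T
    rw [eq_top_iff, ← hint.submodule_iSup_eq_top]
    refine iSup_le fun i => ?_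
    by_cases hi : i ∈ T
    · exact le_trans (hMS_le hi) le_sup_left
    · exact le_trans (hMS_le (Set.mem_compl hi)) le_sup_right
  have hMSdisj : ∀ T : Set ι, Disjoint (MS Tᶜ) (MS T) :=
    fun T => disjoint_biSup_biSup hint.submodule_iSupIndep (disjoint_compl_left)
  have hcompl : ∀ T, Closed T → IsCompl (N ⊓ MS T) ((N' ⊓ MS T) ⊔ MS Tᶜ) := by
    intro T hT
    constructor
    · rw [Submodule.disjoint_def]
      intro x h1 h2
      have h3 : x ∈ ((N' ⊓ MS T) ⊔ MS Tᶜ) ⊓ MS T := ⟨h2, h1.2⟩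
      rw [sup_inf_assoc_of_le _ (inf_le_right : N' ⊓ MS T ≤ MS T),
        (hMSdisj T).eq_bot, sup_bot_eq] at h3
      exact Submodule.disjoint_def.mp hc.disjoint x h1.1 h3.1
    · rw [codisjoint_iff, eq_top_iff, ← hMStop T]
      refine sup_le ?_ ?_
      · refine le_trans (hsplit T hT) ?_
        refine sup_le le_sup_left (le_trans le_sup_left le_sup_right)
      · exact le_trans le_sup_right le_sup_right
  set P : ι → Submodule R M := fun i => (N' ⊓ MS (SL i)) ⊔ MS (SL i)ᶜ with hPdef
  have hPcompl : ∀ i, IsCompl (N ⊓ MS (SL i)) (P i) := fun i => hcompl _ (hSLclosed i)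
  set Q : ι → Submodule R M := fun i => N ⊓ MS (SS i) ⊓ P i with hQdef
  have hQN : ∀ i, Q i ≤ N := fun i => le_trans inf_le_left inf_le_left
  have hQP : ∀ i, Q i ≤ P i := fun i => inf_le_right
  have hQNSS : ∀ i, Q i ≤ N ⊓ MS (SS i) := fun i => inf_le_left
  have hQdis : ∀ i, Disjoint (Q i) (N ⊓ MS (SL i)) :=
    fun i => Disjoint.mono_left (hQP i) (hPcompl i).disjoint.symm
  have hQj_le : ∀ {j i : ι}, j < i → Q j ≤ N ⊓ MS (SL i) := by
    intro j i hji
    refine le_trans (hQNSS j) (le_inf inf_le_left ?_)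
    exact le_trans inf_le_right (hMSmono (hSS_SL hji))
  -- independence of the Q family
  have key : ∀ (n : ℕ) (F : Finset ι), F.card ≤ n → ∀ i ∉ F, ∀ x ∈ Q i,
      x ∈ (⨆ j ∈ (F : Set ι), Q j) → x = 0 := by
    intro n
    induction n with
    | zero =>
        intro F hF i hiF x hxQ hxS
        rw [Finset.card_eq_zero.mp (Nat.le_zero.mp hF)] at hxS
        simpa using hxS
    | succ n ih =>
        intro F hF i hiF x hxQ hxS
        rcases F.eq_empty_or_nonempty with rfl | hne
        · simpa using hxS
        set k := F.max' hne with hkdef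
        have hkF : k ∈ F := F.max'_mem hne
        have hki : k ≠ i := fun h => hiF (h ▸ hkF)
        have hcard' : (F.erase k).card ≤ n := by
          rw [Finset.card_erase_of_mem hkF]
          omega
        rcases lt_or_gt_of_ne hki with hk | hk
        · -- k < i
          have hle : (⨆ j ∈ (F : Set ι), Q j) ≤ N ⊓ MS (SL i) := by
            refine iSup₂_le fun j hj => ?_
            exact hQj_le (lt_of_le_of_lt (F.le_max' j hj) hk)
          exact Submodule.disjoint_def.mp (hQdis i) x hxQ (hle hxS)
        · -- i < k
          obtain ⟨F', a, hF'sub, ha, hsa⟩ := mem_biSup_decomp hxS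
          have hF'F : ∀ j ∈ F', j ∈ F := fun j hj => hF'sub hj
          by_cases hkF' : k ∈ F'
          · have hak : a k = 0 := by
              have h1 : a k = x - ∑ j ∈ F'.erase k, a j := by
                rw [← hsa, ← Finset.add_sum_erase _ _ hkF']
                abel
              have h2 : a k ∈ N ⊓ MS (SL k) := by
                rw [h1]
                refine Submodule.sub_mem _ ?_ ?_
                · exact le_trans (hQNSS i) (le_inf inf_le_left
                    (le_trans inf_le_right (hMSmono (hSS_SL hk)))) hxQ
                · refine Submodule.sum_mem _ fun j hj => ?_
                  have hjk : j < k := lt_of_le_of_lt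
                    (le_of_eq rfl)
                    (lt_of_le_of_ne (F.le_max' j (hF'F j (Finset.mem_of_mem_erase hj)))
                      (Finset.ne_of_mem_erase hj))
                  exact hQj_le hjk (ha j (Finset.mem_of_mem_erase hj))
              exact (Submodule.disjoint_def.mp (hQdis k) _ (ha k hkF') h2)
            have hxsum : x = ∑ j ∈ F'.erase k, a j := by
              rw [← hsa, ← Finset.add_sum_erase _ _ hkF', hak, zero_add]
            have hxS' : x ∈ ⨆ j ∈ ((F.erase k : Finset ι) : Set ι), Q j := by
              rw [hxsum]
              refine Submodule.sum_mem _ fun j hj => ?_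
              refine Submodule.mem_iSup_of_mem j (Submodule.mem_iSup_of_mem ?_
                (ha j (Finset.mem_of_mem_erase hj)))
              exact Finset.mem_coe.mpr (Finset.mem_erase.mpr
                ⟨Finset.ne_of_mem_erase hj, hF'F j (Finset.mem_of_mem_erase hj)⟩)
            exact ih (F.erase k) hcard' i (fun h => hiF (Finset.mem_of_mem_erase h)) x hxQ hxS'
          · have hxS' : x ∈ ⨆ j ∈ ((F.erase k : Finset ι) : Set ι), Q j := by
              rw [← hsa]
              refine Submodule.sum_mem _ fun j hj => ?_
              refine Submodule.mem_iSup_of_mem j (Submodule.mem_iSup_of_mem ?_ (ha j hj))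
              refine Finset.mem_coe.mpr (Finset.mem_erase.mpr ⟨?_, hF'F j hj⟩)
              rintro rfl
              exact hkF' hj
            exact ih (F.erase k) hcard' i (fun h => hiF (Finset.mem_of_mem_erase h)) x hxQ hxS'
  have hind : iSupIndep Q := by
    intro i
    rw [Submodule.disjoint_def]
    intro x hxQ hxS
    obtain ⟨F, hF⟩ := Submodule.mem_iSup_iff_exists_finset.mp hxS
    have hF' : x ∈ ⨆ j ∈ ((F.erase i : Finset ι) : Set ι), Q j := by
      refine (iSup₂_le fun j hjF => iSup_le fun hji => ?_ :
        (⨆ j ∈ F, ⨆ (_ : j ≠ i), Q j) ≤ _) hF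
      exact le_biSup _ (Finset.mem_coe.mpr (Finset.mem_erase.mpr ⟨hji, hjF⟩))
    exact key (F.erase i).card (F.erase i) le_rfl i (Finset.notMem_erase i F) x hxQ hF'
  -- the Q's fill up N
  have hmain : ∀ i : ι, N ⊓ MS (SS i) ≤ ⨆ j, Q j := by
    intro i
    induction i using WellFoundedLT.induction with
    | _ i ih =>
      intro x hx
      have hxtop : x ∈ (N ⊓ MS (SL i)) ⊔ P i := by
        rw [(hPcompl i).sup_eq_top]; trivial
      obtain ⟨a, ha, b, hb, hab⟩ := Submodule.mem_sup.mp hxtop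
      have hbQ : b ∈ Q i := by
        refine ⟨⟨?_, ?_⟩, hb⟩
        · have : b = x - a := by rw [← hab]; abel
          rw [this]
          exact Submodule.sub_mem _ hx.1 ha.1
        · have : b = x - a := by rw [← hab]; abel
          rw [this]
          exact Submodule.sub_mem _ hx.2 (hMSmono (hSL_SS i) ha.2)
      have haQ : a ∈ ⨆ j, Q j := by
        have ha2 : a ∈ MS (SL i) := ha.2
        have hSL_eq : MS (SL i) = ⨆ j : Set.Iio i, MS (W ↑j) := by
          rw [hSLdef, hMSdef]
          simp only []
          rw [Set.biUnion_eq_iUnion, iSup_iUnion]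
        rw [hSL_eq] at ha2
        obtain ⟨Fj, hFj⟩ := Submodule.mem_iSup_iff_exists_finset.mp ha2
        rcases Fj.eq_empty_or_nonempty with rfl | hne
        · have : a = 0 := by simpa using hFj
          rw [this]; exact Submodule.zero_mem _
        · set Fi : Finset ι := Fj.image Subtype.val with hFidef
          have hFine : Fi.Nonempty := by rw [hFidef]; exact hne.image _
          set m := Fi.max' hFine with hmdef
          have hmi : m < i := by
            have hm : m ∈ Fi := Fi.max'_mem hFine
            rw [hFidef] at hm
            obtain ⟨j, -, hj⟩ := Finset.mem_image.mp hm
            rw [← hj]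
            exact j.2
          have hle : (⨆ j ∈ Fj, MS (W ↑j)) ≤ MS (SS m) := by
            refine iSup₂_le fun j hj => ?_
            refine hMSmono ?_
            refine Set.subset_biUnion_of_mem (u := W) ?_
            refine Set.mem_Iic.mpr ?_
            refine Fi.le_max' _ ?_
            exact Finset.mem_image.mpr ⟨j, hj, rfl⟩

          have ham : a ∈ N ⊓ MS (SS m) := ⟨ha.1, hle hFj⟩
          exact ih m hmi ham
      rw [← hab]
      exact Submodule.add_mem _ haQ (Submodule.mem_iSup_of_mem i hbQ)
  have hNsup : (⨆ j, Q j) = N := by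
    apply le_antisymm
    · exact iSup_le hQN
    · intro x hx
      rcases (supp x).eq_empty_or_nonempty with hemp | hne
      · have h1 := hsuppmem x
        rw [hemp] at h1
        have : x = 0 := by simpa using h1
        rw [this]; exact Submodule.zero_mem _
      · set m := (supp x).max' hne with hmdef
        have hsub : (↑(supp x) : Set ι) ⊆ SS m := by
          intro j hj
          refine Set.mem_biUnion (Set.mem_Iic.mpr ((supp x).le_max' j hj)) (hW1 j)
        exact hmain m ⟨hx, hMSmono hsub (hsuppmem x)⟩
  -- build B
  set B : ι → Submodule R ↥N := fun i => (Q i).comap N.subtype with hBdef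
  have hmapB : ∀ i, (B i).map N.subtype = Q i := by
    intro i
    rw [hBdef]
    simp only []
    rw [Submodule.map_comap_subtype]
    exact inf_eq_right.mpr (hQN i)
  refine ⟨ι, ‹DecidableEq ι›, B, ?_, ?_⟩
  · rw [DirectSum.isInternal_submodule_iff_iSupIndep_and_iSup_eq_top]
    constructor
    · intro i
      rw [Submodule.disjoint_def]
      intro x hxB hxS
      have h1 : (x : M) ∈ Q i := hxB
      have h2 : (x : M) ∈ ⨆ j, ⨆ (_ : j ≠ i), Q j := by
        have h3 := Submodule.mem_map_of_mem (f := N.subtype) hxS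
        rw [Submodule.map_iSup] at h3
        refine (iSup_le fun j => ?_ : (⨆ j, Submodule.map N.subtype (⨆ (_ : j ≠ i), B j)) ≤ _) h3
        rw [Submodule.map_iSup]
        refine iSup_le fun hji => ?_
        rw [hmapB j]
        exact le_iSup₂_of_le j hji le_rfl
      have h4 : (x : M) = 0 := Submodule.disjoint_def.mp (hind i) _ h1 h2
      exact Subtype.ext h4
    · apply Submodule.map_injective_of_injective N.injective_subtype
      rw [Submodule.map_iSup]
      refine (iSup_congr hmapB).trans ?_
      rw [hNsup, Submodule.map_top, Submodule.range_subtype]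
  · intro j
    -- complement of Q j in M
    have hYN : (⨆ k, ⨆ (_ : k ≠ j), Q k) ≤ N := iSup_le fun k => iSup_le fun _ => hQN k
    have hcompl_j : IsCompl (Q j) ((⨆ k, ⨆ (_ : k ≠ j), Q k) ⊔ N') := by
      constructor
      · rw [Submodule.disjoint_def]
        intro x h1 h2
        have h3 : x ∈ ((⨆ k, ⨆ (_ : k ≠ j), Q k) ⊔ N') ⊓ N := ⟨h2, hQN j h1⟩
        rw [sup_inf_assoc_of_le _ hYN] at h3
        have h4 : N' ⊓ N = ⊥ := hc.disjoint.symm.eq_bot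
        rw [h4, sup_bot_eq] at h3
        exact Submodule.disjoint_def.mp (hind j) x h1 h3
      · rw [codisjoint_iff, eq_top_iff, ← hc.sup_eq_top]
        refine sup_le ?_ (le_trans le_sup_right le_sup_right)
        rw [← hNsup]
        refine iSup_le fun k => ?_
        by_cases hkj : k = j
        · subst hkj; exact le_sup_left
        · exact le_trans (le_iSup₂_of_le k hkj le_rfl)
            (le_trans le_sup_left le_sup_right)
    -- Q j is κ-generated
    have hQgen_j : SGen κ (Q j) := by
      set σ : M →ₗ[R] M := prC (hPcompl j).symm with hσdef
      have hσmem : ∀ x, σ x ∈ P j := fun x => prC_mem _ x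
      have hσleft : ∀ x ∈ P j, σ x = x := fun x hx => prC_apply_left _ hx
      have hσright : ∀ x ∈ N ⊓ MS (SL j), σ x = 0 := fun x hx => prC_apply_right _ hx
      have hσsub : ∀ x, x - σ x ∈ N ⊓ MS (SL j) := fun x => prC_sub_mem _ x
      have hQeq : Q j = (MS (W j)).map (σ ∘ₗ π) := by
        apply le_antisymm
        · intro x hx
          have hxN : x ∈ N := hQN j hx
          have hxpi : x = π x := (prC_apply_left hc hxN).symm
          have hxMS : x ∈ MS (SS j) := (hQNSS j hx).2
          have hSSsup : MS (SS j) = MS (SL j) ⊔ MS (W j) := by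
            rw [hSS_union j, hMSdef]
            simp only []
            rw [iSup_union]
          have hxmap : π x ∈ (MS (SL j)).map π ⊔ (MS (W j)).map π := by
            rw [← Submodule.map_sup, ← hSSsup]
            exact Submodule.mem_map_of_mem hxMS
          obtain ⟨u, hu, w, hw, huw⟩ := Submodule.mem_sup.mp hxmap
          have huN : u ∈ N ⊓ MS (SL j) := by
            obtain ⟨y, hy, rfl⟩ := hu
            exact ⟨prC_mem hc y, hMSinv _ (hSLclosed j) ⟨y, hy, rfl⟩⟩
          have hσx : σ x = x := hσleft x (hQP j hx)
          have hxw : x = σ w := by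
            have h5 : σ (π x) = σ u + σ w := by rw [← huw, map_add]
            rw [← hxpi, hσx, hσright u huN, zero_add] at h5
            exact h5
          obtain ⟨y, hy, hyw⟩ := hw
          refine ⟨y, hy, ?_⟩
          rw [LinearMap.comp_apply, hyw, ← hxw]
        · rintro x ⟨y, hy, rfl⟩
          rw [LinearMap.comp_apply]
          set w := π y with hwdef
          have hwN : w ∈ N := prC_mem hc y
          have hwMS : w ∈ MS (SS j) := by
            refine hMSinv _ (hSSclosed j) ⟨y, hMSmono (hW_SS j) hy, rfl⟩
          have hsub : w - σ w ∈ N ⊓ MS (SL j) := hσsub w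
          refine ⟨⟨?_, ?_⟩, hσmem w⟩
          · have : σ w = w - (w - σ w) := by abel
            rw [this]
            exact Submodule.sub_mem _ hwN hsub.1
          · have : σ w = w - (w - σ w) := by abel
            rw [this]
            exact Submodule.sub_mem _ hwMS (hMSmono (hSL_SS j) hsub.2)
      rw [hQeq]
      exact ((hMSgen (W j) (hWcard j))).map _
    have hpresQ : IsPresented κ R ↥(Q j) :=
      presented_of_summand hκ hint hpres hcompl_j hQgen_j
    exact IsPresented.of_equiv (Submodule.comapSubtypeEquivOfLe (hQN j)).symm hpresQ
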